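/- For θ ∈ (0, π/2), the function A(θ) = θ − tan θ + (π/2 − θ)·tan²θ is strictly increasing, and A(θ) → 0 as θ → 0⁺ while A(θ) → π/2 as θ → π/2⁻. -/

import Mathlib

open Real Set Filter

lemma stmt_7_aux {t : ℝ} (ht0 : 0 < t) (ht2 : t < π / 2) :
    0 ≤ (Real.tan t - t) / Real.tan t ^ 2 ∧ (Real.tan t - t) / Real.tan t ^ 2 ≤ t / 2 := by
  have htan : t < Real.tan t := Real.lt_tan ht0 ht2
  have htanpos : 0 < Real.tan t := lt_trans ht0 htan
  have hcpos : 0 < Real.cos t :=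
    Real.cos_pos_of_mem_Ioo ⟨by linarith [Real.pi_pos], ht2⟩
  have hsin : Real.sin t ≤ t := Real.sin_le ht0.le
  have hcosb : 1 - t ^ 2 / 2 < Real.cos t := Real.one_sub_sq_div_two_lt_cos ht0.ne'
  refine ⟨div_nonneg (by linarith) (by positivity), ?_⟩
  rw [div_le_iff₀ (by positivity)]
  have htc : Real.tan t * Real.cos t = Real.sin t := by
    rw [Real.tan_eq_sin_div_cos]; field_simp
  have h1 : Real.tan t - t ≤ Real.tan t * (1 - Real.cos t) := by nlinarith
  have h2 : Real.tan t * (1 - Real.cos t) ≤ Real.tan t * (t ^ 2 / 2) :=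
    mul_le_mul_of_nonneg_left (by linarith) htanpos.le
  have h3 : t * Real.tan t * t ≤ t * Real.tan t * Real.tan t :=
    mul_le_mul_of_nonneg_left htan.le (mul_pos ht0 htanpos).le
  nlinarith [h1, h2, h3]

theorem stmt_7 (A : ℝ → ℝ)
    (hA : ∀ θ, A θ = θ - Real.tan θ + (π / 2 - θ) * Real.tan θ ^ 2) :
    StrictMonoOn A (Set.Ioo 0 (π / 2))
    ∧ Filter.Tendsto A (nhdsWithin 0 (Set.Ioi 0)) (nhds 0)
    ∧ Filter.Tendsto A (nhdsWithin (π / 2) (Set.Iio (π / 2))) (nhds (π / 2)) := by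
  have hAeq : A = fun θ => θ - Real.tan θ + (π / 2 - θ) * Real.tan θ ^ 2 := funext hA
  have htancont : ContinuousOn Real.tan (Set.Ioo 0 (π / 2)) := by
    intro x hx
    have : Real.cos x ≠ 0 :=
      (Real.cos_pos_of_mem_Ioo ⟨by linarith [hx.1, Real.pi_pos], hx.2⟩).ne'
    exact (Real.continuousAt_tan.2 this).continuousWithinAt
  refine ⟨?_, ?_, ?_⟩
  · -- strict monotonicity
    apply strictMonoOn_of_deriv_pos (convex_Ioo _ _)
    · rw [hAeq]
      exact (continuousOn_id.sub htancont).add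
        ((continuousOn_const.sub continuousOn_id).mul (htancont.pow 2))
    · intro x hx
      rw [interior_Ioo] at hx
      obtain ⟨hx0, hx2⟩ := hx
      have hcpos : 0 < Real.cos x :=
        Real.cos_pos_of_mem_Ioo ⟨by linarith [Real.pi_pos], hx2⟩
      have hspos : 0 < Real.sin x := Real.sin_pos_of_pos_of_lt_pi hx0 (by linarith [Real.pi_pos])
      have hc : Real.cos x ≠ 0 := hcpos.ne'
      have htanpos : 0 < Real.tan x := Real.tan_pos_of_pos_of_lt_pi_div_two hx0 hx2
      have ht := Real.hasDerivAt_tan hc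
      have hd : HasDerivAt (fun θ => θ - Real.tan θ + (π / 2 - θ) * Real.tan θ ^ 2)
          (1 - 1 / Real.cos x ^ 2 + ((0 - 1) * Real.tan x ^ 2
            + (π / 2 - x) * (↑(2:ℕ) * Real.tan x ^ (2 - 1) * (1 / Real.cos x ^ 2)))) x :=
        ((hasDerivAt_id' (x := x)).sub ht).add
          (((hasDerivAt_const x (π / 2)).sub (hasDerivAt_id' (x := x))).mul (ht.pow 2))
      rw [hAeq, hd.deriv]
      have key : Real.sin x * Real.cos x < π / 2 - x := by
        have h1 : Real.sin (2 * (π / 2 - x)) < 2 * (π / 2 - x) := Real.sin_lt (by linarith)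
        have h2 : Real.sin (2 * (π / 2 - x)) = 2 * (Real.sin x * Real.cos x) := by
          rw [show 2 * (π / 2 - x) = π - 2 * x by ring, Real.sin_pi_sub, Real.sin_two_mul]
          ring
        linarith [h2 ▸ h1]
      have h1 : Real.tan x ^ 2 + 1 = 1 / Real.cos x ^ 2 := by
        rw [Real.tan_eq_sin_div_cos, div_pow]
        field_simp
        exact Real.sin_sq_add_cos_sq x
      have h3 : Real.tan x * Real.cos x ^ 2 = Real.sin x * Real.cos x := by
        rw [Real.tan_eq_sin_div_cos]; field_simp
      have h5 : (Real.tan x ^ 2 + 1) * Real.cos x ^ 2 = 1 := by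
        rw [h1]; field_simp
      have h4 : Real.tan x < (π / 2 - x) * (Real.tan x ^ 2 + 1) := by
        nlinarith [key, h3, h5, mul_pos hcpos hcpos]
      rw [← h1]
      push_cast
      norm_num
      nlinarith [mul_pos htanpos (sub_pos.2 h4)]
  · -- limit at 0
    have hcont : ContinuousAt A 0 := by
      rw [hAeq]
      exact ((continuousAt_id.sub (Real.continuousAt_tan.2 (by simp))).add
        ((continuousAt_const.sub continuousAt_id).mul
          ((Real.continuousAt_tan.2 (by simp)).pow 2)))
    have h0 : A 0 = 0 := by simp [hA]
    have := (hcont.continuousWithinAt (s := Set.Ioi (0:ℝ))).tendsto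
    rwa [h0] at this
  · -- limit at π/2
    have hbounds : ∀ θ ∈ Set.Ioo 0 (π / 2),
        π / 2 - (3 / 2) * (π / 2 - θ) ≤ A θ ∧ A θ ≤ θ := by
      intro θ hθ
      have ht0 : 0 < π / 2 - θ := by linarith [hθ.2]
      have ht2 : π / 2 - θ < π / 2 := by linarith [hθ.1]
      obtain ⟨hk1, hk2⟩ := stmt_7_aux ht0 ht2
      have htanpos : 0 < Real.tan (π / 2 - θ) :=
        lt_trans ht0 (Real.lt_tan ht0 ht2)
      have htanθ : Real.tan θ = (Real.tan (π / 2 - θ))⁻¹ := by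
        have h := Real.tan_pi_div_two_sub (π / 2 - θ)
        rw [show π / 2 - (π / 2 - θ) = θ by ring] at h
        exact h
      have hAθ : A θ = π / 2 - (π / 2 - θ)
          - (Real.tan (π / 2 - θ) - (π / 2 - θ)) / Real.tan (π / 2 - θ) ^ 2 := by
        have hne : Real.tan (π / 2 - θ) ≠ 0 := htanpos.ne'
        rw [hA, htanθ]
        set T := Real.tan (π / 2 - θ) with hT
        field_simp
        ring
      constructor
      · rw [hAθ]; linarith
      · rw [hAθ]; linarith
    have hmem : Set.Ioo 0 (π / 2) ∈ nhdsWithin (π / 2) (Set.Iio (π / 2)) := by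
      rw [← Set.Ioi_inter_Iio]
      exact Filter.inter_mem (mem_nhdsWithin_of_mem_nhds
        (Ioi_mem_nhds (by positivity))) self_mem_nhdsWithin
    have hlow : Filter.Tendsto (fun θ : ℝ => π / 2 - (3 / 2) * (π / 2 - θ))
        (nhdsWithin (π / 2) (Set.Iio (π / 2))) (nhds (π / 2)) := by
      have h : Filter.Tendsto (fun θ : ℝ => π / 2 - (3 / 2) * (π / 2 - θ)) (nhds (π / 2))
          (nhds (π / 2 - (3 / 2) * (π / 2 - π / 2))) :=
        Filter.Tendsto.const_sub _ ((tendsto_const_nhds.sub tendsto_id).const_mul _)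
      simpa using h.mono_left nhdsWithin_le_nhds
    have hup : Filter.Tendsto (fun θ : ℝ => θ)
        (nhdsWithin (π / 2) (Set.Iio (π / 2))) (nhds (π / 2)) :=
      tendsto_id.mono_left nhdsWithin_le_nhds
    refine tendsto_of_tendsto_of_tendsto_of_le_of_le' hlow hup ?_ ?_
    · filter_upwards [hmem] with θ hθ using (hbounds θ hθ).1
    · filter_upwards [hmem] with θ hθ using (hbounds θ hθ).2
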